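/- Let a be a binary word satisfying condition (P_k), and let ψ(a) = (c, d). Then c and d each satisfy condition (P_{k−1}). -/
import Mathlib


/-- Condition `(P_k)` for a binary word: every subword (block of consecutive
letters) of length `2ᵏ − 1` contains at most `2^(k−1)` ones. -/
def CondP (w : List Bool) (k : ℕ) : Prop :=
  ∀ i : ℕ, i + (2 ^ k - 1) ≤ w.length →
    ((w.drop i).take (2 ^ k - 1)).count true ≤ 2 ^ (k - 1)

/-- The three blocks `0`, `10`, `110` from which a binary word with no three
consecutive ones can be assembled (up to one extra final `0`). -/
inductive Blk : Type
  | z : Blk    -- the block `0`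
  | oz : Blk   -- the block `10`
  | ooz : Blk  -- the block `110`
  deriving DecidableEq

/-- The binary word corresponding to a block. -/
def Blk.toWord : Blk → List Bool
  | .z => [false]
  | .oz => [true, false]
  | .ooz => [true, true, false]

/-- The first word `c` of the pair `ψ(a) = (c, d)`, computed from the block
factorization `a = b₁ ⋯ b_m`: `c_j = 0` if `b_j = 0`; `c_j = 1` if
`b_j = 110`; and if `b_j = 10` then `c_j = 1` or `0` according as
`#{i < j : b_i = 10}` is even or odd. -/
def psiC (bs : List Blk) : List Bool :=
  List.ofFn fun j : Fin bs.length =>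
    match bs.get j with
    | .z => false
    | .ooz => true
    | .oz => decide (Even ((bs.take j.val).count Blk.oz))

/-- The second word `d` of the pair `ψ(a) = (c, d)`: `d_j = 0` if `b_j = 0`;
`d_j = 1` if `b_j = 110`; and if `b_j = 10` then `d_j = 0` or `1` according
as `#{i < j : b_i = 10}` is even or odd. -/
def psiD (bs : List Blk) : List Bool :=
  List.ofFn fun j : Fin bs.length =>
    match bs.get j with
    | .z => false
    | .ooz => true
    | .oz => decide (Odd ((bs.take j.val).count Blk.oz))

def psiRec (f : ℕ → Bool) : ℕ → List Blk → List Bool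
  | _, [] => []
  | p, .z :: t => false :: psiRec f p t
  | p, .ooz :: t => true :: psiRec f p t
  | p, .oz :: t => f p :: psiRec f (p+1) t

def onesT : List Blk → ℕ
  | [] => 0
  | .z :: t => onesT t
  | .oz :: t => 1 + onesT t
  | .ooz :: t => 2 + onesT t

lemma psiRec_drop (f : ℕ → Bool) :
    ∀ (t : List Blk) (p i : ℕ), ∃ q, (psiRec f p t).drop i = psiRec f q (t.drop i) := by
  intro t
  induction t with
  | nil => intro p i; exact ⟨p, by simp [psiRec]⟩
  | cons b t ih =>
    intro p i
    cases i with
    | zero => exact ⟨p, rfl⟩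
    | succ i =>
      cases b
      · simpa [psiRec] using ih p i
      · simpa [psiRec] using ih (p+1) i
      · simpa [psiRec] using ih p i

lemma psiRec_count (f : ℕ → Bool) (hf : ∀ p, f p = true → f (p+1) = false) :
    ∀ (t : List Blk) (p n : ℕ),
      2 * (((psiRec f p t).take n).count true) ≤ onesT (t.take n) + (if f p = true then 1 else 0) := by
  intro t
  induction t with
  | nil => intro p n; simp [psiRec]
  | cons b t ih =>
    intro p n
    cases n with
    | zero => simp
    | succ n =>
      cases b with
      | z =>
        have h := ih p n
        simp [psiRec, onesT] at h ⊢
        omega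
      | ooz =>
        have h := ih p n
        simp only [psiRec, List.take_succ_cons, List.count_cons, onesT] at h ⊢
        simp at *
        omega
      | oz =>
        rcases hfp : f p with _ | _
        · have h := ih (p+1) n
          have hle : (if f (p+1) = true then (1:ℕ) else 0) ≤ 1 := by split <;> omega
          simp only [psiRec, List.take_succ_cons, List.count_cons, onesT, hfp] at h ⊢
          simp at *
          omega
        · have h := ih (p+1) n
          rw [hf p hfp] at h
          simp only [psiRec, List.take_succ_cons, List.count_cons, onesT, hfp] at h ⊢
          simp at *
          omega

lemma flatten_len : ∀ (t : List Blk), (List.flatten (t.map Blk.toWord)).length = t.length + onesT t := by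
  intro t
  induction t with
  | nil => simp [onesT]
  | cons b t ih => cases b <;> simp [Blk.toWord, onesT, ih] <;> omega

lemma count_take_flatten : ∀ (u : List Blk) (r : List Bool) (n : ℕ),
    min (onesT u) (n + 1 - u.length) ≤ ((List.flatten (u.map Blk.toWord) ++ r).take n).count true := by
  intro u
  induction u with
  | nil => intro r n; simp [onesT]
  | cons b u ih =>
    intro r n
    cases b with
    | z =>
      cases n with
      | zero => simp [onesT]
      | succ n =>
        have h := ih r n
        simp only [List.map_cons, List.flatten_cons, Blk.toWord, onesT, List.cons_append,
          List.append_assoc, List.take_succ_cons, List.count_cons, List.length_cons] at h ⊢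
        simp at *
        omega
    | oz =>
      match n with
      | 0 => simp [onesT]
      | 1 =>
        simp only [List.map_cons, List.flatten_cons, Blk.toWord, onesT, List.cons_append,
          List.append_assoc, List.take_succ_cons, List.take_zero, List.count_cons,
          List.length_cons, List.count_nil]
        simp
        try omega
      | (n+2) =>
        have h := ih r n
        simp only [List.map_cons, List.flatten_cons, Blk.toWord, onesT, List.cons_append,
          List.append_assoc, List.take_succ_cons, List.count_cons, List.length_cons] at h ⊢
        simp at *
        omega
    | ooz =>
      match n with
      | 0 => simp [onesT]
      | 1 =>
        simp only [List.map_cons, List.flatten_cons, Blk.toWord, onesT, List.cons_append,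
          List.append_assoc, List.take_succ_cons, List.take_zero, List.count_cons,
          List.length_cons, List.count_nil]
        simp
        try omega
      | 2 =>
        simp only [List.map_cons, List.flatten_cons, Blk.toWord, onesT, List.cons_append,
          List.append_assoc, List.take_succ_cons, List.take_zero, List.count_cons,
          List.length_cons, List.count_nil]
        simp
        try omega
      | (n+3) =>
        have h := ih r n
        simp only [List.map_cons, List.flatten_cons, Blk.toWord, onesT, List.cons_append,
          List.append_assoc, List.take_succ_cons, List.count_cons, List.length_cons] at h ⊢
        simp at *
        omega

lemma psi_ofFn (g : ℕ → Bool) :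
    ∀ (bs : List Blk) (p : ℕ),
    (List.ofFn fun j : Fin bs.length =>
      match bs.get j with
      | .z => false
      | .ooz => true
      | .oz => g (p + (bs.take j.val).count Blk.oz)) = psiRec g p bs := by
  intro bs
  induction bs with
  | nil => intro p; simp [psiRec]
  | cons b t ih =>
    intro p
    rw [List.ofFn_succ]
    have htail : (fun j : Fin t.length =>
        (match (b :: t).get j.succ with
          | .z => false
          | .ooz => true
          | .oz => g (p + ((b :: t).take j.succ.val).count Blk.oz))) =
        (fun j : Fin t.length =>
          match t.get j with
          | Blk.z => false
          | Blk.ooz => true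
          | Blk.oz => g ((p + if b = Blk.oz then 1 else 0) + (t.take j.val).count Blk.oz)) := by
      funext j
      simp only [List.get_eq_getElem, Fin.val_succ, List.getElem_cons_succ,
        List.take_succ_cons, List.count_cons]
      cases hj : t[(j : ℕ)] <;> simp only [hj]
      congr 1
      cases b <;> simp <;> omega
    cases b with
    | z =>
      simp only [psiRec]
      congr 1
      rw [htail]
      simpa using ih p
    | oz =>
      simp only [psiRec]
      congr 1
      rw [htail]
      simpa using ih (p+1)
    | ooz =>
      simp only [psiRec]
      congr 1
      rw [htail]
      simpa using ih p

lemma psiC_eq (bs : List Blk) : psiC bs = psiRec (fun p => decide (Even p)) 0 bs := by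
  have h := psi_ofFn (fun p => decide (Even p)) bs 0
  simp only [Nat.zero_add] at h
  exact h

lemma psiD_eq (bs : List Blk) : psiD bs = psiRec (fun p => decide (Odd p)) 0 bs := by
  have h := psi_ofFn (fun p => decide (Odd p)) bs 0
  simp only [Nat.zero_add] at h
  exact h

lemma window_ones (a : List Bool) (bs : List Blk) (k' : ℕ)
    (hfact : a = (bs.map Blk.toWord).flatten ∨
      a ++ [false] = (bs.map Blk.toWord).flatten)
    (hPk : CondP a (k'+2)) :
    ∀ i, i + (2^(k'+1) - 1) ≤ bs.length →
      onesT ((bs.drop i).take (2^(k'+1) - 1)) ≤ 2^(k'+1) := by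
  intro i hi
  set N : ℕ := 2^(k'+1) with hN
  have hN2 : 2 ≤ N := by
    calc 2 = 2^1 := rfl
    _ ≤ 2^(k'+1) := Nat.pow_le_pow_right (by norm_num) (by omega)
  set L : ℕ := N - 1 with hL
  set u : List Blk := (bs.drop i).take L with hu
  have hul : u.length = L := by
    rw [hu, List.length_take, List.length_drop]
    omega
  by_contra hS
  push_neg at hS
  have hS' : N + 1 ≤ onesT u := hS
  set P : List Bool := List.flatten ((bs.take i).map Blk.toWord) with hP
  set Q : List Bool := List.flatten (u.map Blk.toWord) with hQ
  set R : List Bool := List.flatten ((bs.drop (i+L)).map Blk.toWord) with hR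
  have hsplit : bs = bs.take i ++ (u ++ bs.drop (i + L)) := by
    conv_lhs => rw [← List.take_append_drop i bs]
    congr 1
    rw [hu, ← List.drop_drop]
    exact (List.take_append_drop L (bs.drop i)).symm
  have hA : (bs.map Blk.toWord).flatten = P ++ (Q ++ R) := by
    conv_lhs => rw [hsplit]
    simp [hP, hQ, hR, List.map_append, List.flatten_append]
  set start : ℕ := P.length with hstart
  set l : ℕ := 2^(k'+2) - 1 with hl
  have hlLN : l = L + N := by
    have : (2:ℕ)^(k'+2) = 2 * 2^(k'+1) := by ring
    omega
  have hQlen : Q.length = L + onesT u := by rw [hQ, flatten_len, hul]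
  have hAlen : start + l + 1 ≤ (P ++ (Q ++ R)).length := by
    simp only [List.length_append]
    omega
  have hcount : N + 1 ≤ (((P ++ (Q ++ R)).drop start).take l).count true := by
    rw [hstart, List.drop_left]
    have h := count_take_flatten u R l
    rw [← hQ] at h
    have h2 : min (onesT u) (l + 1 - u.length) = min (onesT u) (N + 1) := by
      rw [hul]; omega
    omega
  have key : N + 1 ≤ ((a.drop start).take l).count true ∧ start + l ≤ a.length := by
    rcases hfact with h | h
    · rw [h, hA]
      refine ⟨hcount, ?_⟩
      simp only [List.length_append] at hAlen ⊢
      omega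
    · have hlen : a.length + 1 = (P ++ (Q ++ R)).length := by
        rw [← hA, ← h]; simp
      have h1 : start + l ≤ a.length := by omega
      refine ⟨?_, h1⟩
      have hdrop : (a ++ [false]).drop start = a.drop start ++ [false] := by
        rw [List.drop_append]
        have : start - a.length = 0 := by omega
        rw [this]
        simp
      have htake : ((a ++ [false]).drop start).take l = (a.drop start).take l ++ ([false].take (l - (a.drop start).length)) := by
        rw [hdrop, List.take_append]
      have hcnt2 : (((a ++ [false]).drop start).take l).count true = ((a.drop start).take l).count true := by
        rw [htake, List.count_append]
        have hsub := ((List.take_sublist (l - (a.drop start).length) [false]).count_le true)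
        have hz : List.count true [false] = 0 := rfl
        omega
      rw [← hcnt2, h, hA]
      exact hcount
  obtain ⟨kc, kl⟩ := key
  have hwin := hPk start (by omega)
  rw [← hl] at hwin
  have e : k' + 2 - 1 = k' + 1 := by omega
  rw [e] at hwin
  omega

/-- Lemma 4.5: let `a` be a binary word satisfying `(P_k)` which factors (up
to concatenation of one extra `0`) as a concatenation `b₁ ⋯ b_m` of blocks
from `{0, 10, 110}`, and let `ψ(a) = (c, d)`.  Then `c` and `d` each satisfy
`(P_{k−1})`. -/
theorem stmt15 (a : List Bool) (bs : List Blk) (k : ℕ)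
    (hfact : a = (bs.map Blk.toWord).flatten ∨
      a ++ [false] = (bs.map Blk.toWord).flatten)
    (hPk : CondP a k) :
    CondP (psiC bs) (k - 1) ∧ CondP (psiD bs) (k - 1) := by
  match k with
  | 0 => constructor <;> (intro i hi; simp)
  | 1 => constructor <;> (intro i hi; simp)
  | (k'+2) =>
    have hw := window_ones a bs k' hfact hPk
    have hE : ∀ p, (fun p => decide (Even p)) p = true → (fun p => decide (Even p)) (p+1) = false := by
      intro p hp
      simp only [decide_eq_true_eq] at hp
      simp [Nat.even_add_one, hp]
    have hO : ∀ p, (fun p => decide (Odd p)) p = true → (fun p => decide (Odd p)) (p+1) = false := by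
      intro p hp
      simp only [decide_eq_true_eq] at hp
      simp only [decide_eq_false_iff_not]
      rw [Nat.odd_iff] at hp ⊢
      omega
    have he1 : k' + 2 - 1 = k' + 1 := by omega
    have he2 : k' + 2 - 1 - 1 = k' := by omega
    have hpow : (2:ℕ)^(k'+1) = 2 * 2^k' := by ring
    constructor
    · intro i hi
      rw [he1]
      rw [he1] at hi
      have hlen : (psiC bs).length = bs.length := by simp [psiC]
      rw [hlen] at hi
      rw [psiC_eq]
      obtain ⟨q, hq⟩ := psiRec_drop (fun p => decide (Even p)) bs 0 i
      rw [hq]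
      have h1 := psiRec_count (fun p => decide (Even p)) hE (bs.drop i) q (2^(k'+1)-1)
      have h2 := hw i hi
      have hle : (if decide (Even q) = true then (1:ℕ) else 0) ≤ 1 := by split <;> omega
      rw [Nat.add_sub_cancel]
      omega
    · intro i hi
      rw [he1]
      rw [he1] at hi
      have hlen : (psiD bs).length = bs.length := by simp [psiD]
      rw [hlen] at hi
      rw [psiD_eq]
      obtain ⟨q, hq⟩ := psiRec_drop (fun p => decide (Odd p)) bs 0 i
      rw [hq]
      have h1 := psiRec_count (fun p => decide (Odd p)) hO (bs.drop i) q (2^(k'+1)-1)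
      have h2 := hw i hi
      have hle : (if decide (Odd q) = true then (1:ℕ) else 0) ≤ 1 := by split <;> omega
      rw [Nat.add_sub_cancel]
      omega
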